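/- Let R be the local model algebra described in the context. Then the ℂ-algebra homomorphisms χ : R → ℂ with χ(t) = 0 are characterized as follows: every such χ satisfies (i) χ(s_a) = 0 for every a ∈ G with ℓ̃(a) > 0, and (ii) for all a, b ∈ G with ℓ̃(a) = ℓ̃(b) = 0 one has χ(s_a) ≠ 0 and χ(s_{a+b}) = ev₀(ε(a,b))·χ(s_a)·χ(s_b); conversely, every tuple (c_a)_{a∈G} of complex numbers satisfying (i) c_a = 0 whenever ℓ̃(a) > 0 and (ii) c_a ≠ 0 and c_{a+b} = ev₀(ε(a,b))·c_a·c_b whenever ℓ̃(a) = ℓ̃(b) = 0, arises as (χ(s_a))_{a∈G} for a unique ℂ-algebra homomorphism χ : R → ℂ with χ(t) = 0. -/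

import Mathlib

open Polynomial

noncomputable section

/-- The prime ideal `(t) ⊆ ℂ[t]`. -/
abbrev Spr : Ideal (Polynomial ℂ) := Ideal.span {(X : Polynomial ℂ)}

instance : Spr.IsPrime :=
  (Ideal.span_singleton_prime Polynomial.X_ne_zero).mpr Polynomial.prime_X

/-- `S = ℂ[t]_(t)`, the localization of `ℂ[t]` at the prime ideal `(t)`. -/
abbrev Sloc := Localization.AtPrime Spr

instance SlocCommRing : CommRing Sloc := inferInstance
instance SlocCommSemiring : CommSemiring Sloc := SlocCommRing.toCommSemiring

/-- The element `t ∈ S`. -/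
def tS : Sloc := algebraMap (Polynomial ℂ) Sloc X

/-- The residue map `ev₀ : S → ℂ`, `t ↦ 0`. -/
def ev₀ : Sloc →+* ℂ :=
  IsLocalization.lift (M := Spr.primeCompl) (S := Sloc)
    (g := Polynomial.evalRingHom (0 : ℂ))
    (fun y => by
      have hy : (y : Polynomial ℂ) ∉ Spr := y.2
      rw [isUnit_iff_ne_zero]
      intro h0
      apply hy
      rw [Ideal.mem_span_singleton]
      refine Polynomial.X_dvd_iff.mpr ?_
      rw [Polynomial.coeff_zero_eq_eval_zero]
      simpa using h0)

/-- `λ(a,b) = ℓ̃(a) + ℓ̃(b) - ℓ̃(a+b)`, as a natural number. -/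
def lamNat {G : Type} [AddCommGroup G] (ℓ : G → ℚ) (a b : G) : ℕ :=
  (ℓ a + ℓ b - ℓ (a + b)).num.toNat

/-- The ideal of relations `s₀ - 1` and `t^{λ(a,b)}·s_{a+b} - ε(a,b)·s_a·s_b`. -/
def relIdeal (G : Type) [AddCommGroup G] (ℓ : G → ℚ) (ε : G → G → Slocˣ) :
    Ideal (MvPolynomial G Sloc) :=
  Ideal.span ({MvPolynomial.X 0 - 1} ∪
    Set.range (fun p : G × G =>
      MvPolynomial.C tS ^ lamNat ℓ p.1 p.2 * MvPolynomial.X (p.1 + p.2) -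
        MvPolynomial.C ((ε p.1 p.2 : Sloc)) * MvPolynomial.X p.1 * MvPolynomial.X p.2))

/-- The local model algebra `R = S[s_a : a ∈ G]/I`. -/
abbrev LocalModel (G : Type) [AddCommGroup G] (ℓ : G → ℚ) (ε : G → G → Slocˣ) :=
  MvPolynomial G Sloc ⧸ relIdeal G ℓ ε

/-- The image of the variable `s_a` in `R`. -/
def sVar {G : Type} [AddCommGroup G] (ℓ : G → ℚ) (ε : G → G → Slocˣ) (a : G) :
    LocalModel G ℓ ε :=
  Ideal.Quotient.mk (relIdeal G ℓ ε) (MvPolynomial.X a)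

/-- The image of `t` in `R`. -/
def tR {G : Type} [AddCommGroup G] (ℓ : G → ℚ) (ε : G → G → Slocˣ) :
    LocalModel G ℓ ε :=
  algebraMap Sloc (LocalModel G ℓ ε) tS

/-- `N`, the lcm of the denominators of the `ℓ̃(a)`. -/
def ramOrder (G : Type) [AddCommGroup G] [Fintype G] (ℓ : G → ℚ) : ℕ :=
  Finset.univ.lcm fun a : G => (ℓ a).den


/-! ### Auxiliary lemmas -/

lemma ev₀_algebraMap (z : ℂ) : ev₀ (algebraMap ℂ Sloc z) = z := by
  rw [IsScalarTower.algebraMap_apply ℂ (Polynomial ℂ) Sloc, ev₀, IsLocalization.lift_eq]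
  simp

lemma ev₀_tS : ev₀ tS = 0 := by
  rw [tS, ev₀, IsLocalization.lift_eq]; simp

lemma ev₀_unit_ne_zero (u : Slocˣ) : ev₀ (u : Sloc) ≠ 0 :=
  (u.isUnit.map ev₀).ne_zero

lemma rat_int_eq_zero (q : ℚ) (hden : q.den = 1) (h1 : -1 < q) (h2 : q < 1) : q = 0 := by
  rw [← (Rat.den_eq_one_iff q).mp hden] at h1 h2 ⊢
  have h1' : (-1 : ℤ) < q.num := by exact_mod_cast h1
  have h2' : q.num < 1 := by exact_mod_cast h2
  have h0 : q.num = 0 := by omega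
  rw [h0]; norm_num

lemma tR_eq {G : Type} [AddCommGroup G] (ℓ : G → ℚ) (ε : G → G → Slocˣ) :
    tR ℓ ε = Ideal.Quotient.mk (relIdeal G ℓ ε) (MvPolynomial.C tS) := by
  rw [tR, IsScalarTower.algebraMap_apply Sloc (MvPolynomial G Sloc) (LocalModel G ℓ ε),
    Ideal.Quotient.algebraMap_eq, MvPolynomial.algebraMap_eq]

/-- Characterization of the `ℂ`-algebra homomorphisms `χ : R → ℂ` with
`χ(t) = 0`: every such `χ` satisfies (i) `χ(s_a) = 0` for `ℓ̃(a) > 0` and (ii) for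
`ℓ̃(a) = ℓ̃(b) = 0` one has `χ(s_a) ≠ 0` and `χ(s_{a+b}) = ev₀(ε(a,b))·χ(s_a)·χ(s_b)`;
conversely every tuple `(c_a)` satisfying (i) and (ii) arises from a unique such `χ`. -/
theorem localModel_points_over_zero_characterization
    (G : Type) [AddCommGroup G] [Fintype G]
    (ℓ : G → ℚ) (hℓ0 : ℓ 0 = 0) (hℓ_nonneg : ∀ a, 0 ≤ ℓ a) (hℓ_lt : ∀ a, ℓ a < 1)
    (hℓ_int : ∀ a b, (ℓ a + ℓ b - ℓ (a + b)).den = 1)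
    (ε : G → G → Slocˣ)
    (hε_symm : ∀ a b, ε a b = ε b a)
    (hε_one : ∀ a, ε a 0 = 1)
    (hε_coc : ∀ a b c, ε a b * ε (a + b) c = ε a (b + c) * ε b c) :
    (∀ χ : LocalModel G ℓ ε →ₐ[ℂ] ℂ, χ (tR ℓ ε) = 0 →
      (∀ a : G, 0 < ℓ a → χ (sVar ℓ ε a) = 0) ∧
      (∀ a b : G, ℓ a = 0 → ℓ b = 0 →
        χ (sVar ℓ ε a) ≠ 0 ∧
        χ (sVar ℓ ε (a + b)) = ev₀ (ε a b) * χ (sVar ℓ ε a) * χ (sVar ℓ ε b))) ∧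
    (∀ c : G → ℂ,
      (∀ a : G, 0 < ℓ a → c a = 0) →
      (∀ a b : G, ℓ a = 0 → ℓ b = 0 → c a ≠ 0 ∧ c (a + b) = ev₀ (ε a b) * c a * c b) →
      ∃! χ : LocalModel G ℓ ε →ₐ[ℂ] ℂ,
        χ (tR ℓ ε) = 0 ∧ ∀ a : G, χ (sVar ℓ ε a) = c a) := by
  -- basic facts about lamNat
  have hlam_zero : ∀ a b : G, ℓ a = 0 → ℓ b = 0 → ℓ (a + b) = 0 ∧ lamNat ℓ a b = 0 := by
    intro a b ha hb
    have h0 : ℓ a + ℓ b - ℓ (a + b) = 0 :=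
      rat_int_eq_zero _ (hℓ_int a b) (by linarith [hℓ_lt (a + b), hℓ_nonneg a, hℓ_nonneg b])
        (by linarith [hℓ_nonneg (a + b)])
    refine ⟨by linarith, ?_⟩
    simp [lamNat, h0]
  have hlam_cases : ∀ a b : G, lamNat ℓ a b = 0 → ℓ a + ℓ b ≤ ℓ (a + b) := by
    intro a b h
    have hnum : (ℓ a + ℓ b - ℓ (a + b)).num ≤ 0 := Int.toNat_eq_zero.mp h
    have hq : ℓ a + ℓ b - ℓ (a + b) ≤ 0 := by
      by_contra hq
      push_neg at hq
      have := Rat.num_pos.mpr hq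
      omega
    linarith
  -- χ ∘ mk ∘ C = ev₀ for any point over t = 0
  have hCmk : ∀ χ : LocalModel G ℓ ε →ₐ[ℂ] ℂ, χ (tR ℓ ε) = 0 →
      ∀ u : Sloc, χ (Ideal.Quotient.mk (relIdeal G ℓ ε) (MvPolynomial.C u)) = ev₀ u := by
    intro χ hχ
    have heq : (χ.toRingHom.comp
        ((Ideal.Quotient.mk (relIdeal G ℓ ε)).comp MvPolynomial.C)) = ev₀ := by
      apply IsLocalization.ringHom_ext Spr.primeCompl
      apply Polynomial.ringHom_ext
      · intro z
        simp only [RingHom.comp_apply, AlgHom.toRingHom_eq_coe, RingHom.coe_coe]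
        rw [← Polynomial.algebraMap_eq, ← IsScalarTower.algebraMap_apply, ev₀_algebraMap,
          ← MvPolynomial.algebraMap_eq, ← IsScalarTower.algebraMap_apply,
          ← Ideal.Quotient.algebraMap_eq, ← IsScalarTower.algebraMap_apply]
        exact χ.commutes z
      · simp only [RingHom.comp_apply, AlgHom.toRingHom_eq_coe, RingHom.coe_coe]
        show χ (Ideal.Quotient.mk (relIdeal G ℓ ε) (MvPolynomial.C tS)) = ev₀ tS
        rw [ev₀_tS, ← tR_eq]
        exact hχ
    intro u
    exact DFunLike.congr_fun heq u
  -- the defining relations, evaluated at χ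
  have hrel : ∀ χ : LocalModel G ℓ ε →ₐ[ℂ] ℂ, χ (tR ℓ ε) = 0 → ∀ a b : G,
      (0 : ℂ) ^ lamNat ℓ a b * χ (sVar ℓ ε (a + b)) =
        ev₀ (ε a b) * χ (sVar ℓ ε a) * χ (sVar ℓ ε b) := by
    intro χ hχ a b
    have hmem : (MvPolynomial.C tS ^ lamNat ℓ a b * MvPolynomial.X (a + b) -
        MvPolynomial.C ((ε a b : Sloc)) * MvPolynomial.X a * MvPolynomial.X b)
          ∈ relIdeal G ℓ ε := by
      apply Ideal.subset_span
      exact Or.inr ⟨(a, b), rfl⟩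
    have h0 : χ (Ideal.Quotient.mk (relIdeal G ℓ ε)
        (MvPolynomial.C tS ^ lamNat ℓ a b * MvPolynomial.X (a + b) -
          MvPolynomial.C ((ε a b : Sloc)) * MvPolynomial.X a * MvPolynomial.X b)) = 0 := by
      rw [Ideal.Quotient.eq_zero_iff_mem.mpr hmem, map_zero]
    simp only [map_sub, map_mul, map_pow] at h0
    rw [hCmk χ hχ tS, hCmk χ hχ ((ε a b : Sloc)), ev₀_tS, sub_eq_zero] at h0
    exact h0
  -- χ(s₀) = 1
  have hs0 : ∀ χ : LocalModel G ℓ ε →ₐ[ℂ] ℂ, χ (sVar ℓ ε 0) = 1 := by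
    intro χ
    have hmem : (MvPolynomial.X 0 - 1 : MvPolynomial G Sloc) ∈ relIdeal G ℓ ε :=
      Ideal.subset_span (Or.inl rfl)
    have h0 : χ (Ideal.Quotient.mk (relIdeal G ℓ ε)
        (MvPolynomial.X 0 - 1)) = 0 := by
      rw [Ideal.Quotient.eq_zero_iff_mem.mpr hmem, map_zero]
    simp only [map_sub, map_one] at h0
    rw [sub_eq_zero] at h0
    exact h0
  -- nonvanishing on the ℓ = 0 part
  have hne : ∀ χ : LocalModel G ℓ ε →ₐ[ℂ] ℂ, χ (tR ℓ ε) = 0 →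
      ∀ a : G, ℓ a = 0 → χ (sVar ℓ ε a) ≠ 0 := by
    intro χ hχ a ha
    have hnegq : ℓ a + ℓ (-a) - ℓ (a + -a) = 0 :=
      rat_int_eq_zero _ (hℓ_int a (-a))
        (by linarith [hℓ_lt (a + -a), hℓ_nonneg a, hℓ_nonneg (-a)])
        (by rw [ha, add_neg_cancel, hℓ0]; linarith [hℓ_lt (-a)])
    have hnega : ℓ (-a) = 0 := by
      rw [add_neg_cancel, hℓ0, ha] at hnegq; linarith
    have hlam := (hlam_zero a (-a) ha hnega).2
    have h := hrel χ hχ a (-a)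
    rw [hlam, pow_zero, one_mul, add_neg_cancel, hs0 χ] at h
    intro hzero
    rw [hzero] at h
    simp at h
  -- (i): vanishing on the ℓ > 0 part
  have hzero : ∀ χ : LocalModel G ℓ ε →ₐ[ℂ] ℂ, χ (tR ℓ ε) = 0 →
      ∀ a : G, 0 < ℓ a → χ (sVar ℓ ε a) = 0 := by
    intro χ hχ a ha
    by_contra hne0
    have key : ∀ n : ℕ, ℓ (n • a) = n * ℓ a ∧ χ (sVar ℓ ε (n • a)) ≠ 0 := by
      intro n
      induction n with
      | zero =>
        refine ⟨by simp [hℓ0], ?_⟩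
        rw [zero_nsmul, hs0 χ]
        exact one_ne_zero
      | succ n ih =>
        have hrel' := hrel χ hχ a (n • a)
        have hadd : a + n • a = (n + 1) • a := by rw [succ_nsmul, add_comm]
        have hRHS : ev₀ (ε a (n • a)) * χ (sVar ℓ ε a) * χ (sVar ℓ ε (n • a)) ≠ 0 :=
          mul_ne_zero (mul_ne_zero (ev₀_unit_ne_zero _) hne0) ih.2
        rw [← hrel'] at hRHS
        have hlam0 : lamNat ℓ a (n • a) = 0 := by
          by_contra hl
          rw [zero_pow hl, zero_mul] at hRHS
          exact hRHS rfl
        have hχne : χ (sVar ℓ ε ((n + 1) • a)) ≠ 0 := by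
          rw [← hadd]
          intro h
          rw [hlam0, pow_zero, one_mul, h] at hRHS
          exact hRHS rfl
        have hle := hlam_cases a (n • a) hlam0
        have h0 : ℓ a + ℓ (n • a) - ℓ (a + n • a) = 0 :=
          rat_int_eq_zero _ (hℓ_int a (n • a))
            (by linarith [hℓ_lt (a + n • a), hℓ_nonneg a, hℓ_nonneg (n • a)])
            (by linarith)
        rw [hadd, ih.1] at h0
        refine ⟨by push_cast; linarith, hχne⟩
    obtain ⟨n, hn⟩ := exists_nat_gt ((1 : ℚ) / ℓ a)
    have h1 := (key n).1
    have h2 : (1 : ℚ) < n * ℓ a := (div_lt_iff₀ ha).mp hn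
    have h3 := hℓ_lt (n • a)
    rw [h1] at h3
    linarith
  constructor
  · -- forward direction
    intro χ hχ
    refine ⟨hzero χ hχ, fun a b ha hb => ⟨hne χ hχ a ha, ?_⟩⟩
    have h := hrel χ hχ a b
    rw [(hlam_zero a b ha hb).2, pow_zero, one_mul] at h
    exact h
  · -- converse: existence and uniqueness
    intro c hc1 hc2
    have hc0 : c 0 = 1 := by
      obtain ⟨hne0, heq⟩ := hc2 0 0 hℓ0 hℓ0
      rw [add_zero, hε_one, Units.val_one, map_one, one_mul] at heq
      have : c 0 * 1 = c 0 * c 0 := by rw [mul_one]; exact heq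
      exact (mul_left_cancel₀ hne0 this).symm
    set Φ : MvPolynomial G Sloc →+* ℂ := MvPolynomial.eval₂Hom ev₀ c with hΦ
    have hΦC : ∀ u : Sloc, Φ (MvPolynomial.C u) = ev₀ u := fun u =>
      MvPolynomial.eval₂Hom_C _ _ _
    have hΦX : ∀ a : G, Φ (MvPolynomial.X a) = c a := fun a =>
      MvPolynomial.eval₂Hom_X' _ _ _
    have hker : ∀ x ∈ relIdeal G ℓ ε, Φ x = 0 := by
      intro x hx
      have hle : relIdeal G ℓ ε ≤ RingHom.ker Φ := by
        rw [relIdeal, Ideal.span_le]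
        rintro y (hy | ⟨⟨a, b⟩, rfl⟩)
        · rw [Set.mem_singleton_iff] at hy
          subst hy
          simp [RingHom.mem_ker, hΦX, hc0]
        · simp only [SetLike.mem_coe, RingHom.mem_ker, map_sub, map_mul, map_pow, hΦC, hΦX,
            ev₀_tS]
          rw [sub_eq_zero]
          by_cases hab : ℓ a = 0 ∧ ℓ b = 0
          · rw [(hlam_zero a b hab.1 hab.2).2, pow_zero, one_mul]
            exact (hc2 a b hab.1 hab.2).2
          · have hpos : 0 < ℓ a ∨ 0 < ℓ b := by
              rcases not_and_or.mp hab with h | h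
              · exact Or.inl (lt_of_le_of_ne (hℓ_nonneg a) (Ne.symm h))
              · exact Or.inr (lt_of_le_of_ne (hℓ_nonneg b) (Ne.symm h))
            have hrhs : ev₀ ((ε a b : Sloc)) * c a * c b = 0 := by
              rcases hpos with h | h
              · rw [hc1 a h]; ring
              · rw [hc1 b h]; ring
            rw [hrhs]
            rcases Nat.eq_zero_or_pos (lamNat ℓ a b) with h0 | h0
            · rw [h0, pow_zero, one_mul]
              apply hc1
              have := hlam_cases a b h0
              rcases hpos with h | h <;> linarith [hℓ_nonneg a, hℓ_nonneg b]
            · rw [zero_pow h0.ne', zero_mul]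
      exact hle hx
    set χ0 : LocalModel G ℓ ε →+* ℂ := Ideal.Quotient.lift (relIdeal G ℓ ε) Φ hker with hχ0
    have hχ0mk : ∀ x : MvPolynomial G Sloc,
        χ0 (Ideal.Quotient.mk (relIdeal G ℓ ε) x) = Φ x := fun x =>
      Ideal.Quotient.lift_mk _ _ _
    set χA : LocalModel G ℓ ε →ₐ[ℂ] ℂ :=
      { toRingHom := χ0
        commutes' := by
          intro z
          rw [IsScalarTower.algebraMap_apply ℂ (MvPolynomial G Sloc) (LocalModel G ℓ ε),
            Ideal.Quotient.algebraMap_eq]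
          show χ0 _ = _
          rw [hχ0mk, IsScalarTower.algebraMap_apply ℂ Sloc (MvPolynomial G Sloc),
            MvPolynomial.algebraMap_eq, hΦC, ev₀_algebraMap]
          rfl } with hχA
    have hχAcoe : ∀ x : LocalModel G ℓ ε, χA x = χ0 x := fun x => rfl
    have hχAt : χA (tR ℓ ε) = 0 := by
      rw [hχAcoe, tR_eq, hχ0mk, hΦC, ev₀_tS]
    have hχAs : ∀ a : G, χA (sVar ℓ ε a) = c a := by
      intro a
      rw [hχAcoe, sVar, hχ0mk, hΦX]
    refine ⟨χA, ⟨hχAt, hχAs⟩, ?_⟩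
    rintro χ' ⟨h't, h's⟩
    have hRH : χ'.toRingHom = χA.toRingHom := by
      apply Ideal.Quotient.ringHom_ext
      apply MvPolynomial.ringHom_ext
      · intro u
        simp only [RingHom.comp_apply, AlgHom.toRingHom_eq_coe, RingHom.coe_coe]
        rw [hCmk χ' h't u, hCmk χA hχAt u]
      · intro a
        simp only [RingHom.comp_apply, AlgHom.toRingHom_eq_coe, RingHom.coe_coe]
        exact (h's a).trans (hχAs a).symm
    exact AlgHom.ext fun x => RingHom.congr_fun hRH x
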